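/- Let t ∈ ℝ, let I ⊆ ℝ be an open interval, and let F, C, s : ℝ → ℝ be infinitely differentiable with F(z) > 0 and C(z) > 0 for all z ∈ I. Define on I: 𝓕₁ = 24·(F·(√C)')' + 4√C·(F'' + (1/2)F − 2) + s·C^{3/2}; 𝓕₂ = (8/3)·((1/4)F'''' − (5/4)F'' + F − 1) + t·s·C^{3/2}·((C^{−1/2})'' − (1/4)C^{−1/2}) + (t/2)·(C/F)·F'·s' + t·C'·s'; and 𝓣 = 16·𝓑(F) − 18t·F·C'·s' − 6t·C·F'·s' − (3/4)·t·s·C^{−1}·(C²·(−16 + 4F + C·s) + 12F·(C')² + 8C·C'·F'), where 𝓑(F) = (−(1/2)F'' + (3/2)F' + F − 1)·((1/2)F'' − (3/2)F' + F − 1) + F'·((1/2)F''' − (3/2)F'' + F'). Then for every z ∈ I, 𝓣'(z) = (−3t/(2√(C(z))))·(s·C)'(z)·𝓕₁(z) + 12F'(z)·𝓕₂(z) − 6t·(3C'(z)/C(z) + F'(z)/F(z))·(C·F·s')'(z). -/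

import Mathlib

open Real


private lemma hasDerivAt_iteratedDeriv' {F : ℝ → ℝ} (hF : ContDiff ℝ (⊤ : ℕ∞) F)
    (n : ℕ) (z : ℝ) : HasDerivAt (iteratedDeriv n F) (iteratedDeriv (n+1) F z) z := by
  rw [iteratedDeriv_succ, iteratedDeriv_eq_iterate]
  exact (((hF.iterate_deriv n).differentiable
    (by simp : ((⊤:ℕ∞) : WithTop ℕ∞) ≠ 0)) _).hasDerivAt

/-- The quadratic third-order operator
`𝓑(F) = (−(1/2)F'' + (3/2)F' + F − 1)·((1/2)F'' − (3/2)F' + F − 1)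
        + F'·((1/2)F''' − (3/2)F'' + F')`. -/
noncomputable def Bop (F : ℝ → ℝ) (z : ℝ) : ℝ :=
  (-(1/2) * iteratedDeriv 2 F z + (3/2) * deriv F z + F z - 1) *
      ((1/2) * iteratedDeriv 2 F z - (3/2) * deriv F z + F z - 1)
    + deriv F z * ((1/2) * iteratedDeriv 3 F z - (3/2) * iteratedDeriv 2 F z + deriv F z)

/-- `𝓕₁ = 24(F·(√C)')' + 4√C·(F'' + (1/2)F − 2) + s·C^{3/2}` (the scalar curvature
equation). -/
noncomputable def Fone (F C s : ℝ → ℝ) (z : ℝ) : ℝ :=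
  24 * deriv (fun w => F w * deriv (fun u => Real.sqrt (C u)) w) z
    + 4 * Real.sqrt (C z) * (iteratedDeriv 2 F z + (1/2) * F z - 2)
    + s z * (C z) ^ ((3:ℝ)/2)

/-- `𝓕₂ = (8/3)((1/4)F'''' − (5/4)F'' + F − 1)
      + t·s·C^{3/2}·((C^{−1/2})'' − (1/4)C^{−1/2}) + (t/2)(C/F)F's' + tC's'`. -/
noncomputable def Ftwo (t : ℝ) (F C s : ℝ → ℝ) (z : ℝ) : ℝ :=
  (8/3) * ((1/4) * iteratedDeriv 4 F z - (5/4) * iteratedDeriv 2 F z + F z - 1)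
    + t * s z * (C z) ^ ((3:ℝ)/2) *
        (deriv (deriv (fun u => (Real.sqrt (C u))⁻¹)) z - (1/4) * (Real.sqrt (C z))⁻¹)
    + (t/2) * (C z / F z) * deriv F z * deriv s z
    + t * deriv C z * deriv s z

/-- `𝓣 = 16𝓑(F) − 18tFC's' − 6tCF's'
      − (3/4)tsC⁻¹·(C²(−16 + 4F + Cs) + 12F(C')² + 8CC'F')`. -/
noncomputable def Tcal (t : ℝ) (F C s : ℝ → ℝ) (z : ℝ) : ℝ :=
  16 * Bop F z - 18 * t * F z * deriv C z * deriv s z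
    - 6 * t * C z * deriv F z * deriv s z
    - (3/4) * t * s z * (C z)⁻¹ *
        ((C z)^2 * (-16 + 4 * F z + C z * s z) + 12 * F z * (deriv C z)^2
          + 8 * C z * deriv C z * deriv F z)

set_option maxHeartbeats 4000000

/-- the constant-of-motion identity for the `Bᵗ`-flat system:
`𝓣' = (−3t/(2√C))·(sC)'·𝓕₁ + 12F'·𝓕₂ − 6t·(3C'/C + F'/F)·(CFs')'`. -/
theorem Bt_flat_constant_of_motion (t : ℝ) (I : Set ℝ)
    (hIopen : IsOpen I) (hIconn : IsPreconnected I)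
    (F C s : ℝ → ℝ)
    (hF : ContDiff ℝ (⊤ : ℕ∞) F) (hC : ContDiff ℝ (⊤ : ℕ∞) C)
    (hs : ContDiff ℝ (⊤ : ℕ∞) s)
    (hFpos : ∀ z ∈ I, 0 < F z) (hCpos : ∀ z ∈ I, 0 < C z) :
    ∀ z ∈ I,
      deriv (Tcal t F C s) z =
        (-3 * t / (2 * Real.sqrt (C z))) * deriv (fun w => s w * C w) z * Fone F C s z
          + 12 * deriv F z * Ftwo t F C s z
          - 6 * t * (3 * deriv C z / C z + deriv F z / F z) *
              deriv (fun w => C w * F w * deriv s w) z := by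
  intro z hz
  have h1top : ((⊤:ℕ∞) : WithTop ℕ∞) ≠ 0 := by simp
  have hcz : 0 < C z := hCpos z hz
  have hcne : C z ≠ 0 := ne_of_gt hcz
  have hfne : F z ≠ 0 := ne_of_gt (hFpos z hz)
  have hrpos : 0 < Real.sqrt (C z) := Real.sqrt_pos.mpr hcz
  have hrne : Real.sqrt (C z) ≠ 0 := ne_of_gt hrpos
  have hF0 : HasDerivAt F (deriv F z) z := ((hF.differentiable h1top) z).hasDerivAt
  have hF1 : HasDerivAt (deriv F) (iteratedDeriv 2 F z) z := by
    have h := hasDerivAt_iteratedDeriv' hF 1 z; rwa [iteratedDeriv_one] at h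
  have hF2 : HasDerivAt (iteratedDeriv 2 F) (iteratedDeriv 3 F z) z :=
    hasDerivAt_iteratedDeriv' hF 2 z
  have hF3 : HasDerivAt (iteratedDeriv 3 F) (iteratedDeriv 4 F z) z :=
    hasDerivAt_iteratedDeriv' hF 3 z
  have hC0 : HasDerivAt C (deriv C z) z := ((hC.differentiable h1top) z).hasDerivAt
  have hC1 : HasDerivAt (deriv C) (iteratedDeriv 2 C z) z := by
    have h := hasDerivAt_iteratedDeriv' hC 1 z; rwa [iteratedDeriv_one] at h
  have hs0 : HasDerivAt s (deriv s z) z := ((hs.differentiable h1top) z).hasDerivAt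
  have hs1 : HasDerivAt (deriv s) (iteratedDeriv 2 s z) z := by
    have h := hasDerivAt_iteratedDeriv' hs 1 z; rwa [iteratedDeriv_one] at h
  -- derivative of sqrt ∘ C on I
  have hgI : ∀ u ∈ I, HasDerivAt (fun v => Real.sqrt (C v))
      (1 / (2 * Real.sqrt (C u)) * deriv C u) u := fun u hu =>
    (Real.hasDerivAt_sqrt (ne_of_gt (hCpos u hu))).comp u
      ((hC.differentiable h1top) u).hasDerivAt
  have hg : HasDerivAt (fun v => Real.sqrt (C v))
      (1 / (2 * Real.sqrt (C z)) * deriv C z) z := hgI z hz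
  have h2rne : 2 * Real.sqrt (C z) ≠ 0 := by positivity
  have hEg : deriv (fun u => Real.sqrt (C u)) =ᶠ[nhds z]
      fun u => 1 / (2 * Real.sqrt (C u)) * deriv C u := by
    filter_upwards [hIopen.mem_nhds hz] with u hu
    exact (hgI u hu).deriv
  have hGform : HasDerivAt (fun u => 1 / (2 * Real.sqrt (C u)) * deriv C u) _ z :=
    (((hasDerivAt_const z (1:ℝ)).div (hg.const_mul 2) h2rne).mul hC1)
  have hg' := hGform.congr_of_eventuallyEq hEg
  -- derivative of (sqrt ∘ C)⁻¹ on I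
  have hhI : ∀ u ∈ I, HasDerivAt (fun v => (Real.sqrt (C v))⁻¹)
      (-(1 / (2 * Real.sqrt (C u)) * deriv C u) / Real.sqrt (C u) ^ 2) u := fun u hu =>
    (hgI u hu).inv (ne_of_gt (Real.sqrt_pos.mpr (hCpos u hu)))
  have hEh : deriv (fun u => (Real.sqrt (C u))⁻¹) =ᶠ[nhds z]
      fun u => -(1 / (2 * Real.sqrt (C u)) * deriv C u) / Real.sqrt (C u) ^ 2 := by
    filter_upwards [hIopen.mem_nhds hz] with u hu
    exact (hhI u hu).deriv
  have hr2ne : Real.sqrt (C z) ^ 2 ≠ 0 := pow_ne_zero _ hrne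
  have hHform : HasDerivAt (fun u => -(1 / (2 * Real.sqrt (C u)) * deriv C u)
      / Real.sqrt (C u) ^ 2) _ z :=
    ((((hasDerivAt_const z (1:ℝ)).div (hg.const_mul 2) h2rne).mul hC1).neg).div
      (hg.pow 2) hr2ne
  have hh' := hHform.congr_of_eventuallyEq hEh
  -- derivative of Tcal
  have hCinv : HasDerivAt (fun w => (C w)⁻¹) _ z := hC0.inv hcne
  have hBop : HasDerivAt (Bop F) _ z :=
    (((((hF2.const_mul (-(1/2))).add (hF1.const_mul (3/2))).add hF0).sub_const 1).mul
      ((((hF2.const_mul (1/2)).sub (hF1.const_mul (3/2))).add hF0).sub_const 1)).add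
      (hF1.mul (((hF3.const_mul (1/2)).sub (hF2.const_mul (3/2))).add hF1))
  have hBIG : HasDerivAt (fun w => (C w)^2 * (-16 + 4 * F w + C w * s w)
      + 12 * F w * (deriv C w)^2 + 8 * C w * deriv C w * deriv F w) _ z :=
    (((hC0.pow 2).mul (((hF0.const_mul 4).const_add (-16)).add (hC0.mul hs0))).add
      ((hF0.const_mul 12).mul (hC1.pow 2))).add (((hC0.const_mul 8).mul hC1).mul hF1)
  have hT : HasDerivAt (Tcal t F C s) _ z :=
    (((hBop.const_mul 16).sub (((hF0.const_mul (18*t)).mul hC1).mul hs1)).sub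
      (((hC0.const_mul (6*t)).mul hF1).mul hs1)).sub
      (((hs0.const_mul ((3/4)*t)).mul hCinv).mul hBIG)
  have hSC : HasDerivAt (fun w => s w * C w) _ z := hs0.mul hC0
  have hCFs : HasDerivAt (fun w => C w * F w * deriv s w) _ z := (hC0.mul hF0).mul hs1
  have hFg : HasDerivAt (fun w => F w * deriv (fun u => Real.sqrt (C u)) w) _ z :=
    hF0.mul hg'
  have hrp : (C z) ^ ((3:ℝ)/2) = C z * Real.sqrt (C z) := by
    rw [show ((3:ℝ)/2) = 1 + 1/2 by norm_num, Real.rpow_add hcz, Real.rpow_one,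
      ← Real.sqrt_eq_rpow]
  simp only [Fone, Ftwo]
  rw [hT.deriv, hSC.deriv, hCFs.deriv, hFg.deriv, hh'.deriv, hg.deriv, hrp]
  simp only [Pi.add_apply, Pi.sub_apply, Pi.mul_apply, Pi.div_apply, Pi.neg_apply, Pi.pow_apply]
  set r := Real.sqrt (C z) with hrdef
  have hcr : C z = r * r := by rw [hrdef]; exact (Real.mul_self_sqrt hcz.le).symm
  rw [hcr]
  have hrne' : r ≠ 0 := hrne
  field_simp
  ring
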